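/- arXiv:2010.00285 — 2 statements merged into one kernel-verified Lean document; each statement's English description precedes it below -/
import Mathlib

section
/- For each n ≥ 0 and 0 ≤ k ≤ n, define P^n_k(x,y) = (1/√π) U_n(x cos(ω) + y sin(ω)) with ω = kπ/(n+1), where U_n is the Chebyshev polynomial of the second kind. Then these functions form an orthonormal family on the unit disk D = {(x,y) : x² + y² ≤ 1} with respect to the Lebesgue measure: ∫_D P^n_k P^{n'}_{k'} dx dy = δ_{nn'} δ_{kk'}. -/
open Real MeasureTheory


section ChebyPrelude
open Real intervalIntegral Polynomial Polynomial.Chebyshev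

lemma integral_cos_mul_pi (c : ℝ) (hc : c ≠ 0) : ∫ x in (0:ℝ)..π, cos (c * x) = sin (c * π) / c := by
  rw [intervalIntegral.integral_comp_mul_left (fun x => cos x) hc]
  simp [integral_cos, div_eq_inv_mul]

lemma sin_orth (a b : ℕ) :
    ∫ x in (0:ℝ)..π, sin (((a:ℝ)+1) * x) * sin (((b:ℝ)+1) * x)
      = if a = b then π / 2 else 0 := by
  set p : ℝ := (a:ℝ) + 1 with hp
  set q : ℝ := (b:ℝ) + 1 with hq
  have key : ∀ x : ℝ, sin (p * x) * sin (q * x)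
      = (cos ((p - q) * x) - cos ((p + q) * x)) / 2 := by
    intro x
    rw [Real.cos_sub_cos, show ((p-q)*x + (p+q)*x)/2 = p*x by ring,
      show ((p-q)*x - (p+q)*x)/2 = -(q*x) by ring, Real.sin_neg]
    ring

  rw [intervalIntegral.integral_congr (fun x _ => key x)]
  have hpq : p + q ≠ 0 := by positivity
  have h2 : ∫ x in (0:ℝ)..π, (cos ((p - q) * x) - cos ((p + q) * x)) / 2
      = ((∫ x in (0:ℝ)..π, cos ((p - q) * x)) - ∫ x in (0:ℝ)..π, cos ((p + q) * x)) / 2 := by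
    rw [intervalIntegral.integral_div, intervalIntegral.integral_sub] <;>
      apply Continuous.intervalIntegrable <;> fun_prop
  rw [h2, integral_cos_mul_pi _ hpq,
    show (p + q) * π = ((a + b + 2 : ℤ) : ℝ) * π by push_cast [hp, hq]; ring,
    Real.sin_int_mul_pi]
  by_cases hab : a = b
  · subst hab
    simp only [if_pos rfl, sub_self, zero_mul, Real.cos_zero, intervalIntegral.integral_const]
    simp [hp, hq]

  · have hne : p - q ≠ 0 := by
      simp only [hp, hq]
      intro h
      exact hab (by exact_mod_cast (by linarith : (a:ℝ) = b))
    rw [integral_cos_mul_pi _ hne,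
      show (p - q) * π = ((a - b : ℤ) : ℝ) * π by push_cast [hp, hq]; ring,
      Real.sin_int_mul_pi, if_neg hab]
    simp

lemma orthU (n m : ℕ) :
    ∫ x in (-1:ℝ)..1, (U ℝ (n:ℤ)).eval x * (U ℝ (m:ℤ)).eval x * Real.sqrt (1 - x^2)
      = if n = m then π / 2 else 0 := by
  have hg : Continuous fun t : ℝ => (U ℝ (n:ℤ)).eval t * (U ℝ (m:ℤ)).eval t * Real.sqrt (1 - t^2) := by
    fun_prop
  have hderiv : ∀ x ∈ Set.uIcc (π:ℝ) 0, HasDerivAt Real.cos (-Real.sin x) x :=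
    fun x _ => Real.hasDerivAt_cos x
  have hsub := intervalIntegral.integral_comp_smul_deriv hderiv
    (by fun_prop : ContinuousOn (fun x => -Real.sin x) (Set.uIcc (π:ℝ) 0)) hg
  rw [Real.cos_pi, Real.cos_zero] at hsub
  rw [← hsub]
  have : ∀ x ∈ Set.uIcc (π:ℝ) 0,
      (-Real.sin x) • ((fun t => (U ℝ (n:ℤ)).eval t * (U ℝ (m:ℤ)).eval t * Real.sqrt (1 - t^2)) ∘ Real.cos) x
      = -(Real.sin (((n:ℝ)+1) * x) * Real.sin (((m:ℝ)+1) * x)) := by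
    intro x hx
    rw [Set.uIcc_comm, Set.uIcc_of_le Real.pi_nonneg] at hx
    have hsin : Real.sin x ≥ 0 := Real.sin_nonneg_of_mem_Icc hx
    have hsqrt : Real.sqrt (1 - Real.cos x ^ 2) = Real.sin x := by
      have h : 1 - Real.cos x ^ 2 = Real.sin x ^ 2 := by nlinarith [Real.sin_sq_add_cos_sq x]
      rw [h]; exact Real.sqrt_sq hsin
    have h1 : (U ℝ (n:ℤ)).eval (Real.cos x) * Real.sin x = Real.sin (((n:ℝ)+1) * x) := by
      have := Polynomial.Chebyshev.U_real_cos x (n:ℤ); push_cast at this ⊢; linarith [this]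
    have h2 : (U ℝ (m:ℤ)).eval (Real.cos x) * Real.sin x = Real.sin (((m:ℝ)+1) * x) := by
      have := Polynomial.Chebyshev.U_real_cos x (m:ℤ); push_cast at this ⊢; linarith [this]
    simp only [Function.comp_apply, smul_eq_mul, hsqrt]
    rw [← h1, ← h2]; ring
  rw [intervalIntegral.integral_congr this, intervalIntegral.integral_neg,
    intervalIntegral.integral_symm, neg_neg, sin_orth n m]


lemma chord (m : ℕ) (θ t : ℝ) (ht : -1 ≤ t) (ht' : t ≤ 1) (hs : Real.sin θ ≠ 0) :
    ∫ y in (-Real.sqrt (1 - t^2))..(Real.sqrt (1 - t^2)),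
        (U ℝ (m:ℤ)).eval (t * Real.cos θ + y * Real.sin θ)
      = 2 / ((m:ℝ)+1) * Real.sqrt (1 - t^2) * (U ℝ (m:ℤ)).eval t * (U ℝ (m:ℤ)).eval (Real.cos θ) := by
  set s := Real.sqrt (1 - t^2) with hsdef
  set c := Real.cos θ
  have hm1 : ((m:ℝ)+1) ≠ 0 := by positivity
  -- antiderivative
  have hF : ∀ y : ℝ, HasDerivAt
      (fun y => (T ℝ ((m:ℤ)+1)).eval (t * c + y * Real.sin θ) / (((m:ℝ)+1) * Real.sin θ))
      ((U ℝ (m:ℤ)).eval (t * c + y * Real.sin θ)) y := by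
    intro y
    have hinner : HasDerivAt (fun y : ℝ => t * c + y * Real.sin θ) (Real.sin θ) y := by
      simpa using ((hasDerivAt_id y).mul_const (Real.sin θ)).const_add (t * c)
    have hpoly := (Polynomial.hasDerivAt (T ℝ ((m:ℤ)+1)) (t * c + y * Real.sin θ)).comp y hinner
    have := hpoly.div_const (((m:ℝ)+1) * Real.sin θ)
    refine this.congr_deriv ?_
    symm
    rw [Polynomial.Chebyshev.T_derivative_eq_U]
    simp only [Polynomial.eval_mul, Polynomial.eval_intCast, add_sub_cancel_right]
    push_cast
    field_simp
  have hInt : IntervalIntegrable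
      (fun y => (U ℝ (m:ℤ)).eval (t * c + y * Real.sin θ)) MeasureTheory.volume (-s) s := by
    apply Continuous.intervalIntegrable; fun_prop
  rw [intervalIntegral.integral_eq_sub_of_hasDerivAt (fun y _ => hF y) hInt]
  -- now evaluate
  set φ := Real.arccos t with hφ
  have hcos : Real.cos φ = t := Real.cos_arccos ht ht'
  have hsin : Real.sin φ = s := Real.sin_arccos t
  have e1 : t * c + s * Real.sin θ = Real.cos (φ - θ) := by
    rw [Real.cos_sub, hcos, hsin]
  have e2 : t * c + (-s) * Real.sin θ = Real.cos (φ + θ) := by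
    rw [Real.cos_add, hcos, hsin]; ring
  rw [e1, e2, Polynomial.Chebyshev.T_real_cos, Polynomial.Chebyshev.T_real_cos]
  have hd : Real.cos ((((m:ℤ)+1 : ℤ) : ℝ) * (φ - θ)) - Real.cos ((((m:ℤ)+1 : ℤ) : ℝ) * (φ + θ))
      = 2 * Real.sin (((m:ℝ)+1) * φ) * Real.sin (((m:ℝ)+1) * θ) := by
    push_cast
    rw [Real.cos_sub_cos,
      show (((m:ℝ)+1) * (φ - θ) + ((m:ℝ)+1) * (φ + θ))/2 = ((m:ℝ)+1)*φ by ring,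
      show (((m:ℝ)+1) * (φ - θ) - ((m:ℝ)+1) * (φ + θ))/2 = -(((m:ℝ)+1)*θ) by ring,
      Real.sin_neg]
    ring
  rw [div_sub_div_same, hd]
  have u1 : Real.sin (((m:ℝ)+1) * φ) = (U ℝ (m:ℤ)).eval t * s := by
    have := Polynomial.Chebyshev.U_real_cos φ (m:ℤ)
    rw [hcos, hsin] at this; push_cast at this; linarith
  have u2 : Real.sin (((m:ℝ)+1) * θ) = (U ℝ (m:ℤ)).eval c * Real.sin θ := by
    have := Polynomial.Chebyshev.U_real_cos θ (m:ℤ)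
    push_cast at this; linarith
  rw [u1, u2]
  field_simp
end ChebyPrelude

section RotPrelude
open Real MeasureTheory Complex

noncomputable def rotEquiv (θ : ℝ) : (ℝ × ℝ) ≃ᵐ (ℝ × ℝ) :=
  (Complex.measurableEquivRealProd.symm.trans
    ((rotation (Circle.exp θ)).toHomeomorph.toMeasurableEquiv)).trans
    Complex.measurableEquivRealProd

lemma rotEquiv_mp (θ : ℝ) : MeasurePreserving (rotEquiv θ) volume volume :=
  (Complex.volume_preserving_equiv_real_prod.comp
    ((rotation (Circle.exp θ)).measurePreserving)).comp
    Complex.volume_preserving_equiv_real_prod.symm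

lemma rotEquiv_apply (θ : ℝ) (p : ℝ × ℝ) :
    rotEquiv θ p = (p.1 * Real.cos θ - p.2 * Real.sin θ, p.1 * Real.sin θ + p.2 * Real.cos θ) := by
  simp only [rotEquiv, MeasurableEquiv.trans_apply, Homeomorph.toMeasurableEquiv_coe,
    LinearIsometryEquiv.coe_toHomeomorph, rotation_apply]
  ext <;>
    simp [Complex.measurableEquivRealProd, Circle.coe_exp, Complex.exp_ofReal_mul_I_re,
      Complex.exp_ofReal_mul_I_im] <;> ring

lemma rotEquiv_preimage (θ : ℝ) :
    rotEquiv θ ⁻¹' {q : ℝ × ℝ | q.1 ^ 2 + q.2 ^ 2 ≤ 1} = {q : ℝ × ℝ | q.1 ^ 2 + q.2 ^ 2 ≤ 1} := by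
  ext p
  simp only [Set.mem_preimage, Set.mem_setOf_eq, rotEquiv_apply]
  have h := Real.sin_sq_add_cos_sq θ
  constructor <;> intro hp <;> nlinarith [hp, h]


lemma diskMeasurable : MeasurableSet {q : ℝ × ℝ | q.1 ^ 2 + q.2 ^ 2 ≤ 1} :=
  (isClosed_le (by fun_prop) continuous_const).measurableSet

lemma diskCompact : IsCompact {q : ℝ × ℝ | q.1 ^ 2 + q.2 ^ 2 ≤ 1} := by
  refine IsCompact.of_isClosed_subset (isCompact_Icc (a := ((-1:ℝ),(-1:ℝ))) (b := ((1:ℝ),(1:ℝ))))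
    (isClosed_le (by fun_prop) continuous_const) ?_
  rintro ⟨x, y⟩ h
  simp only [Set.mem_setOf_eq] at h
  constructor <;> constructor <;> simp <;> nlinarith

lemma diskFubini (f : ℝ → ℝ → ℝ) (hf : Continuous fun p : ℝ × ℝ => f p.1 p.2) :
    ∫ p in {q : ℝ × ℝ | q.1 ^ 2 + q.2 ^ 2 ≤ 1}, f p.1 p.2
      = ∫ x in (-1:ℝ)..1, ∫ y in (-Real.sqrt (1 - x^2))..(Real.sqrt (1 - x^2)), f x y := by
  set D := {q : ℝ × ℝ | q.1 ^ 2 + q.2 ^ 2 ≤ 1} with hD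
  have hmeas := diskMeasurable
  have hint : Integrable (D.indicator fun p : ℝ × ℝ => f p.1 p.2) volume := by
    rw [integrable_indicator_iff hmeas]
    exact hf.continuousOn.integrableOn_compact diskCompact
  calc ∫ p in D, f p.1 p.2
      = ∫ p : ℝ × ℝ, D.indicator (fun p : ℝ × ℝ => f p.1 p.2) p := (integral_indicator hmeas).symm
    _ = ∫ x : ℝ, ∫ y : ℝ, D.indicator (fun p : ℝ × ℝ => f p.1 p.2) (x, y) := by
        rw [MeasureTheory.Measure.volume_eq_prod]
        exact MeasureTheory.integral_prod _ (by rwa [← MeasureTheory.Measure.volume_eq_prod])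
    _ = ∫ x : ℝ, ∫ y in (-Real.sqrt (1 - x^2))..(Real.sqrt (1 - x^2)), f x y := by
        congr 1; funext x
        have hx : ∀ y : ℝ, D.indicator (fun p : ℝ × ℝ => f p.1 p.2) (x, y)
            = Set.indicator {y : ℝ | x^2 + y^2 ≤ 1} (f x) y := by
          intro y
          by_cases h : x^2 + y^2 ≤ 1 <;> simp [Set.indicator, hD, h]
        simp_rw [hx]
        by_cases hx1 : x^2 ≤ 1
        · have hset : {y : ℝ | x^2 + y^2 ≤ 1}
              = Set.Icc (-Real.sqrt (1 - x^2)) (Real.sqrt (1 - x^2)) := by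
            ext y
            have hs : Real.sqrt (1-x^2) ^ 2 = 1 - x^2 := Real.sq_sqrt (by linarith)
            simp only [Set.mem_setOf_eq, Set.mem_Icc]
            constructor
            · intro h
              constructor <;>
                nlinarith [Real.sqrt_nonneg (1-x^2), sq_nonneg (y + Real.sqrt (1-x^2)),
                  sq_nonneg (y - Real.sqrt (1-x^2))]
            · intro ⟨h1, h2⟩
              nlinarith [Real.sqrt_nonneg (1-x^2)]
          rw [hset, integral_indicator measurableSet_Icc, integral_Icc_eq_integral_Ioc,
            ← intervalIntegral.integral_of_le ((neg_nonpos.mpr (Real.sqrt_nonneg _)).trans (Real.sqrt_nonneg _))]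
        · have hset : {y : ℝ | x^2 + y^2 ≤ 1} = ∅ := by
            ext y; simp only [Set.mem_setOf_eq, Set.mem_empty_iff_false, iff_false]; nlinarith
          have hsq : Real.sqrt (1 - x^2) = 0 :=
            Real.sqrt_eq_zero_of_nonpos (by nlinarith)
          rw [hset, hsq]
          simp
    _ = ∫ x in Set.Ioc (-1:ℝ) 1, ∫ y in (-Real.sqrt (1 - x^2))..(Real.sqrt (1 - x^2)), f x y := by
        rw [MeasureTheory.setIntegral_eq_integral_of_forall_compl_eq_zero]
        intro x hx
        simp only [Set.mem_Ioc, not_and_or, not_le, not_lt] at hx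
        have h0 : Real.sqrt (1 - x^2) = 0 := Real.sqrt_eq_zero_of_nonpos (by
          rcases hx with h | h <;> nlinarith)
        simp [h0]
    _ = ∫ x in (-1:ℝ)..1, ∫ y in (-Real.sqrt (1 - x^2))..(Real.sqrt (1 - x^2)), f x y :=
        (intervalIntegral.integral_of_le (by norm_num)).symm
end RotPrelude

/-- orthonormality on the unit disk of the functions
`P^n_k(x,y) = (1/√π) U_n(x cos ω + y sin ω)`, `ω = kπ/(n+1)`, where `U_n` is the
Chebyshev polynomial of the second kind: their pairwise integrals over the unit disk
(with Lebesgue measure) equal `δ_{nn'} δ_{kk'}`. -/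
theorem stmt_3 (n n' k k' : ℕ) (hk : k ≤ n) (hk' : k' ≤ n') :
    (∫ p in {q : ℝ × ℝ | q.1 ^ 2 + q.2 ^ 2 ≤ 1},
        ((1 / Real.sqrt π) *
          (Polynomial.Chebyshev.U ℝ (n : ℤ)).eval
            (p.1 * Real.cos ((k : ℝ) * π / ((n : ℝ) + 1)) +
             p.2 * Real.sin ((k : ℝ) * π / ((n : ℝ) + 1)))) *
        ((1 / Real.sqrt π) *
          (Polynomial.Chebyshev.U ℝ (n' : ℤ)).eval
            (p.1 * Real.cos ((k' : ℝ) * π / ((n' : ℝ) + 1)) +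
             p.2 * Real.sin ((k' : ℝ) * π / ((n' : ℝ) + 1)))))
      = if n = n' ∧ k = k' then 1 else 0 := by
  have hπ : (0:ℝ) < π := Real.pi_pos
  set ω : ℝ := (k : ℝ) * π / ((n : ℝ) + 1) with hωdef
  set ω' : ℝ := (k' : ℝ) * π / ((n' : ℝ) + 1) with hω'def
  set Pn := Polynomial.Chebyshev.U ℝ (n:ℤ) with hPn
  set Pn' := Polynomial.Chebyshev.U ℝ (n':ℤ) with hPn'
  set θ : ℝ := ω' - ω with hθdef
  -- bounds on ω, ω'
  have hn1 : (0:ℝ) < (n:ℝ) + 1 := by positivity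
  have hn'1 : (0:ℝ) < (n':ℝ) + 1 := by positivity
  have hω0 : 0 ≤ ω := by positivity
  have hω'0 : 0 ≤ ω' := by positivity
  have hωπ : ω < π := by
    rw [hωdef, div_lt_iff₀ hn1]
    have : (k:ℝ) < (n:ℝ) + 1 := by exact_mod_cast Nat.lt_succ_of_le hk
    nlinarith
  have hω'π : ω' < π := by
    rw [hω'def, div_lt_iff₀ hn'1]
    have : (k':ℝ) < (n':ℝ) + 1 := by exact_mod_cast Nat.lt_succ_of_le hk'
    nlinarith
  -- Step 1: pull out the constant
  have hsq : Real.sqrt π * Real.sqrt π = π := Real.mul_self_sqrt hπ.le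
  have step1 : (∫ p in {q : ℝ × ℝ | q.1 ^ 2 + q.2 ^ 2 ≤ 1},
        ((1 / Real.sqrt π) * Pn.eval (p.1 * Real.cos ω + p.2 * Real.sin ω)) *
        ((1 / Real.sqrt π) * Pn'.eval (p.1 * Real.cos ω' + p.2 * Real.sin ω')))
      = π⁻¹ * ∫ p in {q : ℝ × ℝ | q.1 ^ 2 + q.2 ^ 2 ≤ 1},
          Pn.eval (p.1 * Real.cos ω + p.2 * Real.sin ω) *
          Pn'.eval (p.1 * Real.cos ω' + p.2 * Real.sin ω') := by
    rw [← MeasureTheory.integral_const_mul]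
    congr 1
    funext p
    field_simp
    rw [Real.sq_sqrt hπ.le]; ring
  rw [step1]
  -- Step 2: rotate by ω
  have hrot := (rotEquiv_mp ω).setIntegral_preimage_emb (rotEquiv ω).measurableEmbedding
      (fun p : ℝ × ℝ => Pn.eval (p.1 * Real.cos ω + p.2 * Real.sin ω) *
        Pn'.eval (p.1 * Real.cos ω' + p.2 * Real.sin ω'))
      {q : ℝ × ℝ | q.1 ^ 2 + q.2 ^ 2 ≤ 1}
  rw [rotEquiv_preimage] at hrot
  rw [← hrot]
  have hcs := Real.sin_sq_add_cos_sq ω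
  have step2 : ∀ p : ℝ × ℝ,
      (fun p : ℝ × ℝ => Pn.eval (p.1 * Real.cos ω + p.2 * Real.sin ω) *
        Pn'.eval (p.1 * Real.cos ω' + p.2 * Real.sin ω')) (rotEquiv ω p)
      = Pn.eval p.1 * Pn'.eval (p.1 * Real.cos θ + p.2 * Real.sin θ) := by
    intro p
    rw [rotEquiv_apply]
    simp only
    have h1 : (p.1 * Real.cos ω - p.2 * Real.sin ω) * Real.cos ω
        + (p.1 * Real.sin ω + p.2 * Real.cos ω) * Real.sin ω = p.1 := by
      linear_combination p.1 * hcs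
    have h2 : (p.1 * Real.cos ω - p.2 * Real.sin ω) * Real.cos ω'
        + (p.1 * Real.sin ω + p.2 * Real.cos ω) * Real.sin ω'
        = p.1 * Real.cos θ + p.2 * Real.sin θ := by
      rw [hθdef, Real.cos_sub, Real.sin_sub]
      ring
    rw [h1, h2]
  simp_rw [step2]
  -- Step 3: Fubini
  rw [diskFubini (fun x y => Pn.eval x * Pn'.eval (x * Real.cos θ + y * Real.sin θ))
    (by fun_prop)]
  -- Step 4: case analysis
  by_cases hθ0 : θ = 0
  · -- θ = 0
    have hinner : ∀ x : ℝ,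
        (∫ y in (-Real.sqrt (1 - x^2))..(Real.sqrt (1 - x^2)),
          Pn.eval x * Pn'.eval (x * Real.cos θ + y * Real.sin θ))
        = Pn.eval x * Pn'.eval x * Real.sqrt (1 - x^2) * 2 := by
      intro x
      have : ∀ y : ℝ, x * Real.cos θ + y * Real.sin θ = x := by
        intro y; rw [hθ0]; simp
      simp_rw [this]
      rw [intervalIntegral.integral_const]
      simp only [smul_eq_mul, sub_neg_eq_add]
      ring
    simp_rw [hinner]
    rw [intervalIntegral.integral_mul_const, orthU]
    by_cases hnn : n = n'
    · have hrn : ((n':ℕ):ℝ) = ((n:ℕ):ℝ) := by exact_mod_cast hnn.symm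
      have hωeq : ω' = ω := by
        have h0 := hθ0
        rw [hθdef, sub_eq_zero] at h0
        exact h0
      have hkk : k = k' := by
        rw [hωdef, hω'def, hrn] at hωeq
        field_simp at hωeq
        norm_cast at hωeq
        omega
      rw [if_pos hnn, if_pos (show n = n' ∧ k = k' from ⟨hnn, hkk⟩)]
      field_simp
    · rw [if_neg hnn, if_neg (fun h => hnn h.1)]
      simp
  · -- θ ≠ 0
    have hθlb : -π < θ := by rw [hθdef]; linarith
    have hθub : θ < π := by rw [hθdef]; linarith
    have hsθ : Real.sin θ ≠ 0 := by
      rw [Ne, Real.sin_eq_zero_iff_of_lt_of_lt hθlb hθub]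
      exact hθ0
    have hcongr : Set.EqOn
        (fun x => ∫ y in (-Real.sqrt (1 - x^2))..(Real.sqrt (1 - x^2)),
          Pn.eval x * Pn'.eval (x * Real.cos θ + y * Real.sin θ))
        (fun x => (2 / ((n':ℝ)+1) * Pn'.eval (Real.cos θ))
          * (Pn.eval x * Pn'.eval x * Real.sqrt (1 - x^2)))
        (Set.uIcc (-1:ℝ) 1) := by
      intro x hx
      rw [Set.uIcc_of_le (by norm_num : (-1:ℝ) ≤ 1)] at hx
      simp only
      rw [intervalIntegral.integral_const_mul, chord n' θ x hx.1 hx.2 hsθ]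
      ring
    rw [intervalIntegral.integral_congr hcongr, intervalIntegral.integral_const_mul, orthU]
    by_cases hnn : n = n'
    · have hrn : ((n':ℕ):ℝ) = ((n:ℕ):ℝ) := by exact_mod_cast hnn.symm
      have hkk : k ≠ k' := by
        intro h
        apply hθ0
        rw [hθdef, hω'def, hωdef, hrn, h]
        ring
      have hU0 : Pn'.eval (Real.cos θ) = 0 := by
        have hu := Polynomial.Chebyshev.U_real_cos θ (n':ℤ)
        have harg : (((n':ℤ):ℝ) + 1) * θ = (((k':ℤ) - (k:ℤ) : ℤ):ℝ) * π := by
          push_cast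
          rw [hθdef, hω'def, hωdef, hrn]
          field_simp
        rw [harg, Real.sin_int_mul_pi] at hu
        exact (mul_eq_zero.mp hu).resolve_right hsθ
      rw [if_pos hnn, if_neg (fun h => hkk h.2), hU0]
      ring
    · rw [if_neg hnn, if_neg (fun h => hnn h.1)]
      simp
end

section
/- Supremizer enrichment preserves the inf-sup constant: let X ∈ ℝ^{n×n} be symmetric positive definite, D ∈ ℝ^{m×n}, and let V_p = [η_1|...|η_{N_p}] ∈ ℝ^{m×N_p} be a matrix of reduced pressure modes with full column rank. Define the supremizers s_l ∈ ℝ^n by X s_l = D^T η_l, and let the reduced velocity space contain span{s_1,...,s_{N_p}}. Then the reduced inf-sup constant β^N := inf_{q ∈ ℝ^{N_p}, q ≠ 0} sup_{v in the reduced velocity space, v ≠ 0} (q^T V_p^T D v)/(‖v‖_X ‖V_p q‖_{X_p}) satisfies β^N ≥ β^h, where β^h := inf_{q ∈ range(V_p), q ≠ 0} sup_{v ∈ ℝ^n, v ≠ 0} (q^T D v)/(‖v‖_X ‖q‖_{X_p}) is the full-order inf-sup constant restricted to the reduced pressure space, and X_p is a symmetric positive definite pressure norm matrix. -/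
open Matrix

/-- Cauchy–Schwarz for a positive semidefinite real matrix. -/
lemma cs_aux {n : ℕ} (X : Matrix (Fin n) (Fin n) ℝ) (hX : X.PosSemidef)
    (u v : Fin n → ℝ) :
    (u ⬝ᵥ X.mulVec v) ^ 2 ≤ (u ⬝ᵥ X.mulVec u) * (v ⬝ᵥ X.mulVec v) := by
  have hsym : Xᵀ = X := by
    have := hX.1
    exact Matrix.isHermitian_iff_isSymm.mp this
  have hswap : ∀ a b : Fin n → ℝ, a ⬝ᵥ X.mulVec b = b ⬝ᵥ X.mulVec a := by
    intro a b
    rw [Matrix.dotProduct_mulVec, ← Matrix.mulVec_transpose, hsym, dotProduct_comm]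
  have key : ∀ t : ℝ,
      0 ≤ (v ⬝ᵥ X.mulVec v) * (t * t) + (2 * (u ⬝ᵥ X.mulVec v)) * t + (u ⬝ᵥ X.mulVec u) := by
    intro t
    have h0 := hX.dotProduct_mulVec_nonneg (u + t • v)
    have hexp : (u + t • v) ⬝ᵥ X.mulVec (u + t • v)
        = (v ⬝ᵥ X.mulVec v) * (t * t) + (2 * (u ⬝ᵥ X.mulVec v)) * t + (u ⬝ᵥ X.mulVec u) := by
      rw [Matrix.mulVec_add, Matrix.mulVec_smul, add_dotProduct,
        smul_dotProduct, dotProduct_add, dotProduct_add,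
        dotProduct_smul, dotProduct_smul, hswap v u]
      simp only [smul_eq_mul]
      ring
    rw [← hexp]
    simpa using h0
  have hd := discrim_le_zero key
  unfold discrim at hd
  nlinarith [hd]



/-- supremizer enrichment preserves the inf-sup constant: if the reduced
velocity space `V` contains all supremizers `s_l = X⁻¹ Dᵀ η_l` of the reduced pressure
modes (columns `η_l` of `V_p`), then the reduced inf-sup constant `β^N` is at least the
full-order inf-sup constant `β^h` restricted to the reduced pressure space. -/
theorem stmt_9 (n m Np : ℕ)
    (X : Matrix (Fin n) (Fin n) ℝ) (hX : X.PosDef)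
    (Xp : Matrix (Fin m) (Fin m) ℝ) (hXp : Xp.PosDef)
    (D : Matrix (Fin m) (Fin n) ℝ)
    (Vp : Matrix (Fin m) (Fin Np) ℝ)
    (hVp : LinearIndependent ℝ (fun l : Fin Np => fun i : Fin m => Vp i l))
    (V : Submodule ℝ (Fin n → ℝ))
    (s : Fin Np → (Fin n → ℝ))
    (hs : ∀ l, X.mulVec (s l) = Dᵀ.mulVec (fun i => Vp i l))
    (hsV : ∀ l, s l ∈ V)
    (βh βN : ℝ)
    (hβh : βh = ⨅ q : {q : Fin m → ℝ // (∃ c : Fin Np → ℝ, q = Vp.mulVec c) ∧ q ≠ 0},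
        ⨆ v : {v : Fin n → ℝ // v ≠ 0},
          ((q : Fin m → ℝ) ⬝ᵥ D.mulVec (v : Fin n → ℝ)) /
            (Real.sqrt ((v : Fin n → ℝ) ⬝ᵥ X.mulVec (v : Fin n → ℝ)) *
              Real.sqrt ((q : Fin m → ℝ) ⬝ᵥ Xp.mulVec (q : Fin m → ℝ))))
    (hβN : βN = ⨅ q : {q : Fin Np → ℝ // q ≠ 0},
        ⨆ v : {v : Fin n → ℝ // v ∈ V ∧ v ≠ 0},
          ((q : Fin Np → ℝ) ⬝ᵥ (Vpᵀ * D).mulVec (v : Fin n → ℝ)) /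
            (Real.sqrt ((v : Fin n → ℝ) ⬝ᵥ X.mulVec (v : Fin n → ℝ)) *
              Real.sqrt (Vp.mulVec (q : Fin Np → ℝ) ⬝ᵥ
                Xp.mulVec (Vp.mulVec (q : Fin Np → ℝ))))) :
    βh ≤ βN := by
  
  subst hβh hβN
  -- symmetry of X
  have hsym : Xᵀ = X := by
    have := hX.1
    exact Matrix.isHermitian_iff_isSymm.mp this
  have hswap : ∀ a b : Fin n → ℝ, a ⬝ᵥ X.mulVec b = b ⬝ᵥ X.mulVec a := by
    intro a b
    rw [Matrix.dotProduct_mulVec, ← Matrix.mulVec_transpose, hsym, dotProduct_comm]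
  have hXpos : ∀ v : Fin n → ℝ, v ≠ 0 → 0 < v ⬝ᵥ X.mulVec v := by
    intro v hv; simpa using hX.dotProduct_mulVec_pos hv
  have hXnn : ∀ v : Fin n → ℝ, 0 ≤ v ⬝ᵥ X.mulVec v := by
    intro v
    by_cases hv : v = 0
    · simp [hv]
    · exact (hXpos v hv).le
  -- the key global bound lemma, for a pressure vector p with supremizer sv
  have key : ∀ (p : Fin m → ℝ) (sv v : Fin n → ℝ), X.mulVec sv = Dᵀ.mulVec p →
      p ⬝ᵥ D.mulVec v ≤ Real.sqrt (sv ⬝ᵥ X.mulVec sv) * Real.sqrt (v ⬝ᵥ X.mulVec v) := by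
    intro p sv v hXsv
    have hnum : p ⬝ᵥ D.mulVec v = sv ⬝ᵥ X.mulVec v := by
      rw [Matrix.dotProduct_mulVec, ← Matrix.mulVec_transpose, ← hXsv,
        dotProduct_comm, hswap v sv]
    rw [hnum]
    have hcs := cs_aux X hX.posSemidef sv v
    calc sv ⬝ᵥ X.mulVec v ≤ |sv ⬝ᵥ X.mulVec v| := le_abs_self _
      _ = Real.sqrt ((sv ⬝ᵥ X.mulVec v) ^ 2) := (Real.sqrt_sq_eq_abs _).symm
      _ ≤ Real.sqrt ((sv ⬝ᵥ X.mulVec sv) * (v ⬝ᵥ X.mulVec v)) := Real.sqrt_le_sqrt hcs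
      _ = Real.sqrt (sv ⬝ᵥ X.mulVec sv) * Real.sqrt (v ⬝ᵥ X.mulVec v) :=
        Real.sqrt_mul (hXnn sv) _
  by_cases hNe : Nonempty {q : Fin Np → ℝ // q ≠ 0}
  · -- main case
    apply le_ciInf
    rintro ⟨q, hq⟩
    -- the pressure vector and its supremizer
    set p : Fin m → ℝ := Vp.mulVec q with hpdef
    have hpsum : p = ∑ l : Fin Np, q l • (fun i => Vp i l) := by
      funext i
      simp [hpdef, Matrix.mulVec, dotProduct, Finset.sum_apply, mul_comm]
    have hp0 : p ≠ 0 := by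
      intro h
      apply hq
      have := Fintype.linearIndependent_iff.mp hVp q (by rw [← hpsum]; exact h)
      funext l; exact this l
    set sv : Fin n → ℝ := ∑ l : Fin Np, q l • s l with hsvdef
    have hXsv : X.mulVec sv = Dᵀ.mulVec p := by
      have h1 : X.mulVec sv = ∑ l : Fin Np, q l • X.mulVec (s l) := by
        rw [hsvdef, ← X.mulVecLin_apply, map_sum]
        simp [Matrix.mulVecLin_apply]
      have h2 : Dᵀ.mulVec p = ∑ l : Fin Np, q l • Dᵀ.mulVec (fun i => Vp i l) := by
        rw [hpsum, ← Dᵀ.mulVecLin_apply, map_sum]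
        simp [Matrix.mulVecLin_apply, Matrix.mulVec_transpose]
      rw [h1, h2]
      exact Finset.sum_congr rfl fun l _ => by rw [hs l]
    have hsvV : sv ∈ V := Submodule.sum_mem _ fun l _ => Submodule.smul_mem _ _ (hsV l)
    -- denominators
    set b : ℝ := Real.sqrt (p ⬝ᵥ Xp.mulVec p) with hbdef
    have hbpos : 0 < b := Real.sqrt_pos.mpr (by simpa using hXp.dotProduct_mulVec_pos hp0)
    have hCnn : 0 ≤ Real.sqrt (sv ⬝ᵥ X.mulVec sv) / b :=
      div_nonneg (Real.sqrt_nonneg _) (Real.sqrt_nonneg _)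
    -- the per-vector bound
    have hbound : ∀ v : Fin n → ℝ, v ≠ 0 →
        (p ⬝ᵥ D.mulVec v) / (Real.sqrt (v ⬝ᵥ X.mulVec v) * b) ≤
          Real.sqrt (sv ⬝ᵥ X.mulVec sv) / b := by
      intro v hv
      have hc : (0 : ℝ) < Real.sqrt (v ⬝ᵥ X.mulVec v) := Real.sqrt_pos.mpr (hXpos v hv)
      have h1 := key p sv v hXsv
      have hdenom : (0 : ℝ) ≤ Real.sqrt (v ⬝ᵥ X.mulVec v) * b := (mul_pos hc hbpos).le
      calc (p ⬝ᵥ D.mulVec v) / (Real.sqrt (v ⬝ᵥ X.mulVec v) * b)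
          ≤ (Real.sqrt (sv ⬝ᵥ X.mulVec sv) * Real.sqrt (v ⬝ᵥ X.mulVec v)) /
              (Real.sqrt (v ⬝ᵥ X.mulVec v) * b) := div_le_div_of_nonneg_right h1 hdenom
        _ = Real.sqrt (sv ⬝ᵥ X.mulVec sv) / b := by
            rw [mul_comm (Real.sqrt (v ⬝ᵥ X.mulVec v)) b,
              mul_div_mul_right _ _ (ne_of_gt hc)]
    -- the numerator identity for the reduced form
    have hnum2 : ∀ v : Fin n → ℝ, q ⬝ᵥ (Vpᵀ * D).mulVec v = p ⬝ᵥ D.mulVec v := by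
      intro v
      rw [← Matrix.mulVec_mulVec, Matrix.dotProduct_mulVec q Vpᵀ,
        ← Matrix.mulVec_transpose, Matrix.transpose_transpose]
    -- βh ≤ f(p)
    have step1 : (⨅ q' : {q' : Fin m → ℝ // (∃ c : Fin Np → ℝ, q' = Vp.mulVec c) ∧ q' ≠ 0},
        ⨆ v : {v : Fin n → ℝ // v ≠ 0},
          ((q' : Fin m → ℝ) ⬝ᵥ D.mulVec (v : Fin n → ℝ)) /
            (Real.sqrt ((v : Fin n → ℝ) ⬝ᵥ X.mulVec (v : Fin n → ℝ)) *
              Real.sqrt ((q' : Fin m → ℝ) ⬝ᵥ Xp.mulVec (q' : Fin m → ℝ)))) ≤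
        ⨆ v : {v : Fin n → ℝ // v ≠ 0},
          (p ⬝ᵥ D.mulVec (v : Fin n → ℝ)) /
            (Real.sqrt ((v : Fin n → ℝ) ⬝ᵥ X.mulVec (v : Fin n → ℝ)) * b) := by
      refine ciInf_le ⟨0, ?_⟩ (⟨p, ⟨q, rfl⟩, hp0⟩ :
        {q' : Fin m → ℝ // (∃ c : Fin Np → ℝ, q' = Vp.mulVec c) ∧ q' ≠ 0})
      rintro x ⟨⟨p', hmem, hp'⟩, rfl⟩
      dsimp only
      by_cases hE : Nonempty {v : Fin n → ℝ // v ≠ 0}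
      · set r : {v : Fin n → ℝ // v ≠ 0} → ℝ := fun v =>
          ((p' : Fin m → ℝ) ⬝ᵥ D.mulVec (v : Fin n → ℝ)) /
            (Real.sqrt ((v : Fin n → ℝ) ⬝ᵥ X.mulVec (v : Fin n → ℝ)) *
              Real.sqrt (p' ⬝ᵥ Xp.mulVec p')) with hrdef
        by_cases hB : BddAbove (Set.range r)
        · obtain ⟨⟨v, hv⟩⟩ := hE
          have hneg : r ⟨-v, neg_ne_zero.mpr hv⟩ = - r ⟨v, hv⟩ := by
            simp [hrdef, Matrix.mulVec_neg, dotProduct_neg, neg_dotProduct,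
              neg_div]
          by_cases hsign : 0 ≤ r ⟨v, hv⟩
          · exact hsign.trans (le_ciSup hB _)
          · have : 0 ≤ r ⟨-v, neg_ne_zero.mpr hv⟩ := by
              rw [hneg]; linarith [lt_of_not_ge hsign]
            exact this.trans (le_ciSup hB _)
        · rw [Real.iSup_of_not_bddAbove hB]
      · rw [not_nonempty_iff] at hE
        rw [Real.iSup_of_isEmpty]
    -- f(p) ≤ C
    have step2 : (⨆ v : {v : Fin n → ℝ // v ≠ 0},
          (p ⬝ᵥ D.mulVec (v : Fin n → ℝ)) /
            (Real.sqrt ((v : Fin n → ℝ) ⬝ᵥ X.mulVec (v : Fin n → ℝ)) * b)) ≤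
        Real.sqrt (sv ⬝ᵥ X.mulVec sv) / b := by
      by_cases hE : Nonempty {v : Fin n → ℝ // v ≠ 0}
      · exact ciSup_le fun v => hbound v v.2
      · rw [not_nonempty_iff] at hE
        rw [Real.iSup_of_isEmpty]; exact hCnn
    -- C ≤ g(q)
    have step3 : Real.sqrt (sv ⬝ᵥ X.mulVec sv) / b ≤
        ⨆ v : {v : Fin n → ℝ // v ∈ V ∧ v ≠ 0},
        (q ⬝ᵥ (Vpᵀ * D).mulVec (v : Fin n → ℝ)) /
          (Real.sqrt ((v : Fin n → ℝ) ⬝ᵥ X.mulVec (v : Fin n → ℝ)) * b) := by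
      by_cases hsv0 : sv = 0
      · have hterm : ∀ v : {v : Fin n → ℝ // v ∈ V ∧ v ≠ 0},
            (q ⬝ᵥ (Vpᵀ * D).mulVec (v : Fin n → ℝ)) /
              (Real.sqrt ((v : Fin n → ℝ) ⬝ᵥ X.mulVec (v : Fin n → ℝ)) * b) = 0 := by
          intro v
          have : p ⬝ᵥ D.mulVec (v : Fin n → ℝ) = 0 := by
            rw [Matrix.dotProduct_mulVec, ← Matrix.mulVec_transpose, ← hXsv, hsv0]
            simp
          rw [hnum2, this, zero_div]
        have hL : Real.sqrt (sv ⬝ᵥ X.mulVec sv) / b = 0 := by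
          rw [hsv0]; simp
        have hR : (⨆ v : {v : Fin n → ℝ // v ∈ V ∧ v ≠ 0},
            (q ⬝ᵥ (Vpᵀ * D).mulVec (v : Fin n → ℝ)) /
              (Real.sqrt ((v : Fin n → ℝ) ⬝ᵥ X.mulVec (v : Fin n → ℝ)) * b)) = 0 := by
          simp only [hterm]
          exact Real.iSup_const_zero
        rw [hL, hR]
      · -- sv is a maximizer inside V
        have hBdd : BddAbove (Set.range fun v : {v : Fin n → ℝ // v ∈ V ∧ v ≠ 0} =>
            (q ⬝ᵥ (Vpᵀ * D).mulVec (v : Fin n → ℝ)) /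
              (Real.sqrt ((v : Fin n → ℝ) ⬝ᵥ X.mulVec (v : Fin n → ℝ)) * b)) := by
          refine ⟨Real.sqrt (sv ⬝ᵥ X.mulVec sv) / b, ?_⟩
          rintro x ⟨v, rfl⟩
          dsimp only
          rw [hnum2]
          exact hbound v v.2.2
        have hle := le_ciSup hBdd (⟨sv, hsvV, hsv0⟩ : {v : Fin n → ℝ // v ∈ V ∧ v ≠ 0})
        refine le_trans ?_ hle
        dsimp only
        have hnumsv : q ⬝ᵥ (Vpᵀ * D).mulVec sv = sv ⬝ᵥ X.mulVec sv := by
          rw [hnum2, Matrix.dotProduct_mulVec, ← Matrix.mulVec_transpose, ← hXsv,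
            dotProduct_comm, hswap sv sv]
        have hapos : 0 < sv ⬝ᵥ X.mulVec sv := hXpos sv hsv0
        have hspos : 0 < Real.sqrt (sv ⬝ᵥ X.mulVec sv) := Real.sqrt_pos.mpr hapos
        rw [hnumsv]
        rw [div_le_div_iff₀ hbpos (mul_pos hspos hbpos)]
        have hms := Real.mul_self_sqrt hapos.le
        nlinarith [hms, hbpos]
    exact step1.trans (step2.trans step3)
  · -- degenerate case : no nonzero reduced pressure
    rw [not_nonempty_iff] at hNe
    have hall : ∀ c : Fin Np → ℝ, c = 0 := by
      intro c
      by_contra h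
      exact hNe.false ⟨c, h⟩
    have hE2 : IsEmpty {q : Fin m → ℝ // (∃ c : Fin Np → ℝ, q = Vp.mulVec c) ∧ q ≠ 0} := by
      constructor
      rintro ⟨p, ⟨c, rfl⟩, hp0⟩
      exact hp0 (by rw [hall c]; simp)
    rw [Real.iInf_of_isEmpty, Real.iInf_of_isEmpty]
end
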